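/- arXiv:1401.0076 — 5 statements merged into one kernel-verified Lean document; each statement's English description precedes it below -/
import Mathlib

section
/- For all ξ ∈ [0, 1/2], the rational function (54 - 108ξ + 72ξ² - 16ξ³)/(54 - 81ξ + 27ξ²) is well-defined (denominators positive) and lies in the interval [64/81, 1]. -/
theorem ratio_bound_small_xi (ξ : ℝ) (h0 : 0 ≤ ξ) (h1 : ξ ≤ 1 / 2) :
    0 < 54 - 81 * ξ + 27 * ξ ^ 2 ∧
    64 / 81 ≤ (54 - 108 * ξ + 72 * ξ ^ 2 - 16 * ξ ^ 3) / (54 - 81 * ξ + 27 * ξ ^ 2) ∧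
    (54 - 108 * ξ + 72 * ξ ^ 2 - 16 * ξ ^ 3) / (54 - 81 * ξ + 27 * ξ ^ 2) ≤ 1 := by
  have hd : 0 < 54 - 81 * ξ + 27 * ξ ^ 2 := by nlinarith [sq_nonneg ξ, sq_nonneg (1 - ξ)]
  refine ⟨hd, ?_, ?_⟩
  · rw [le_div_iff₀ hd]
    nlinarith [sq_nonneg ξ, sq_nonneg (1 - 2*ξ), mul_nonneg h0 (sq_nonneg (1 - 2*ξ))]
  · rw [div_le_one hd]
    nlinarith [mul_nonneg h0 h0, mul_nonneg (mul_nonneg h0 h0) h0]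
end

section
/- For all ξ ∈ [1/8, 1] (more generally whenever the denominator is positive), the function Λ(ξ) = ξ / (1/2 - (3/2)√(3/2)·√((2 - 7ξ + 9ξ² - 5ξ³ + ξ⁴)/(27 - 32ξ + 9ξ²))) satisfies 216/125 ≤ Λ(ξ) ≤ 2. -/
theorem Lambda_bounds (ξ : ℝ) (h0 : 1 / 8 ≤ ξ) (h1 : ξ ≤ 1) :
    216 / 125 ≤ ξ / (1 / 2 - (3 / 2) * Real.sqrt (3 / 2) *
        Real.sqrt ((2 - 7 * ξ + 9 * ξ ^ 2 - 5 * ξ ^ 3 + ξ ^ 4) / (27 - 32 * ξ + 9 * ξ ^ 2))) ∧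
    ξ / (1 / 2 - (3 / 2) * Real.sqrt (3 / 2) *
        Real.sqrt ((2 - 7 * ξ + 9 * ξ ^ 2 - 5 * ξ ^ 3 + ξ ^ 4) / (27 - 32 * ξ + 9 * ξ ^ 2))) ≤ 2 := by
  set P : ℝ := 2 - 7 * ξ + 9 * ξ ^ 2 - 5 * ξ ^ 3 + ξ ^ 4 with hPdef
  set Q : ℝ := 27 - 32 * ξ + 9 * ξ ^ 2 with hQdef
  have hQ : (0:ℝ) < Q := by rw [hQdef]; nlinarith [sq_nonneg (ξ - 1), sq_nonneg ξ]
  have hP : (0:ℝ) ≤ P := by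
    have h := mul_nonneg (pow_nonneg (sub_nonneg.2 h1) 3) (by linarith : (0:ℝ) ≤ 2 - ξ)
    rw [hPdef]; nlinarith [h]
  have hPQ : (0:ℝ) ≤ P / Q := div_nonneg hP hQ.le
  set t : ℝ := (3 / 2) * Real.sqrt (3 / 2) * Real.sqrt (P / Q) with htdef
  have ht0 : 0 ≤ t := by positivity
  have ht2 : t ^ 2 = 27 * P / (8 * Q) := by
    rw [htdef, mul_pow, mul_pow, Real.sq_sqrt (by norm_num : (0:ℝ) ≤ 3/2),
      Real.sq_sqrt hPQ]
    field_simp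
    ring
  -- t ≤ (1 - ξ)/2
  have htle : t ≤ (1 - ξ) / 2 := by
    have hsq : t ^ 2 ≤ ((1 - ξ) / 2) ^ 2 := by
      rw [ht2, div_le_iff₀ (by positivity : (0:ℝ) < 8 * Q)]
      have key : ((1 - ξ) / 2) ^ 2 * (8 * Q) - 27 * P = ξ * (1 - ξ) ^ 2 * (17 - 9 * ξ) := by
        rw [hPdef, hQdef]; ring
      nlinarith [mul_nonneg (mul_nonneg (by linarith : (0:ℝ) ≤ ξ) (sq_nonneg (1 - ξ)))
        (by linarith : (0:ℝ) ≤ 17 - 9 * ξ)]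
    exact le_of_pow_le_pow_left₀ two_ne_zero (by linarith) hsq
  have hD : 0 < 1 / 2 - t := by linarith
  constructor
  · rw [le_div_iff₀ hD]
    -- need 216/125 * (1/2 - t) ≤ ξ, i.e. 108 - 125*216*... : reduce to 108 - 125 ξ ≤ 216 t
    have key : 108 - 125 * ξ ≤ 216 * t := by
      rcases le_or_gt (108 - 125 * ξ) 0 with hc | hc
      · linarith [mul_nonneg (by norm_num : (0:ℝ) ≤ 216) ht0]
      · have hsq : (108 - 125 * ξ) ^ 2 ≤ (216 * t) ^ 2 := by
          rw [mul_pow, ht2]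
          have e1 : (216:ℝ) ^ 2 * (27 * P / (8 * Q)) = 1259712 * P / (8 * Q) := by ring
          rw [e1, le_div_iff₀ (by positivity : (0:ℝ) < 8 * Q)]
          have key2 : 1259712 * P - (108 - 125 * ξ) ^ 2 * (8 * Q)
              = ξ ^ 2 * (134712 * ξ ^ 2 - 354560 * ξ + 210600) := by
            rw [hPdef, hQdef]; ring
          have hξlt : ξ ≤ 108 / 125 := by linarith
          have hquad : (0:ℝ) ≤ 134712 * ξ ^ 2 - 354560 * ξ + 210600 := by
            nlinarith [sq_nonneg (ξ - 108 / 125), sq_nonneg ξ]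
          nlinarith [mul_nonneg (sq_nonneg ξ) hquad]
        have h216 : (0:ℝ) ≤ 216 * t := by positivity
        nlinarith [hsq, hc, h216]
    linarith
  · rw [div_le_iff₀ hD]
    linarith
end

section
/- Define R₁(ξ) = -(1/2)ξ(3-ξ), R₂(ξ) = (1/6)ξ(5-2ξ)(1+ξ), R₃(ξ) = -(1/4)ξ(4-ξ+2ξ²-ξ³). For ξ ∈ (0,1], set c₂ = R₃/R₂ and β₄ = 1 - R₂/c₂². Then |c₂| ≤ 6/5, β₄ ∈ [0,1], and (1-β₄)c₂ ≥ R₁, (1-β₄)c₂² = R₂, (1-β₄)c₂³ = R₃. -/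
private lemma aux_c2b4 (R₁ R₂ R₃ : ℝ) (hR2 : 0 < R₂) (hR3 : R₃ < 0)
    (h65 : -R₃ ≤ 6 / 5 * R₂) (hb : R₂ ^ 3 ≤ R₃ ^ 2) (hr1 : R₂ ^ 2 ≤ R₁ * R₃) :
    |R₃ / R₂| ≤ 6 / 5 ∧
    (0 ≤ 1 - R₂ / (R₃ / R₂) ^ 2 ∧ 1 - R₂ / (R₃ / R₂) ^ 2 ≤ 1) ∧
    (1 - (1 - R₂ / (R₃ / R₂) ^ 2)) * (R₃ / R₂) ≥ R₁ ∧
    (1 - (1 - R₂ / (R₃ / R₂) ^ 2)) * (R₃ / R₂) ^ 2 = R₂ ∧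
    (1 - (1 - R₂ / (R₃ / R₂) ^ 2)) * (R₃ / R₂) ^ 3 = R₃ := by
  have hR2ne : R₂ ≠ 0 := hR2.ne'
  have hR3ne : R₃ ≠ 0 := hR3.ne
  have hc : R₃ / R₂ < 0 := div_neg_of_neg_of_pos hR3 hR2
  have hcne : R₃ / R₂ ≠ 0 := hc.ne
  have hcsq : 0 < (R₃ / R₂) ^ 2 := by positivity
  refine ⟨?_, ⟨?_, ?_⟩, ?_, ?_, ?_⟩
  · rw [abs_of_neg hc, neg_le, le_div_iff₀ hR2]
    linarith
  · rw [sub_nonneg, div_le_one hcsq, div_pow, le_div_iff₀ (by positivity)]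
    nlinarith
  · have : 0 ≤ R₂ / (R₃ / R₂) ^ 2 := by positivity
    linarith
  · have heq : (1 - (1 - R₂ / (R₃ / R₂) ^ 2)) * (R₃ / R₂) = R₂ ^ 2 / R₃ := by
      field_simp
      ring
    rw [heq, ge_iff_le, le_div_iff_of_neg hR3]
    linarith [hr1]
  · field_simp
    ring
  · field_simp
    ring

theorem c2_beta4_properties (ξ : ℝ) (h0 : 0 < ξ) (h1 : ξ ≤ 1) :
    let R₁ : ℝ := -(1 / 2) * ξ * (3 - ξ)
    let R₂ : ℝ := (1 / 6) * ξ * (5 - 2 * ξ) * (1 + ξ)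
    let R₃ : ℝ := -(1 / 4) * ξ * (4 - ξ + 2 * ξ ^ 2 - ξ ^ 3)
    let c₂ : ℝ := R₃ / R₂
    let β₄ : ℝ := 1 - R₂ / c₂ ^ 2
    |c₂| ≤ 6 / 5 ∧ (0 ≤ β₄ ∧ β₄ ≤ 1) ∧
    (1 - β₄) * c₂ ≥ R₁ ∧ (1 - β₄) * c₂ ^ 2 = R₂ ∧ (1 - β₄) * c₂ ^ 3 = R₃ := by
  intro R₁ R₂ R₃ c₂ β₄
  have h1p : (0:ℝ) < 1 + ξ := by linarith
  have h52 : (0:ℝ) < 5 - 2 * ξ := by linarith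
  have hx3 : ξ ^ 3 ≤ ξ := by nlinarith [mul_nonneg (mul_nonneg h0.le (by linarith : (0:ℝ) ≤ 1 - ξ)) h1p.le]
  have hP : (0:ℝ) < 4 - ξ + 2 * ξ ^ 2 - ξ ^ 3 := by nlinarith [sq_nonneg ξ]
  have hR2 : (0:ℝ) < R₂ := by
    have := mul_pos (mul_pos h0 h52) h1p
    show (0:ℝ) < (1 / 6) * ξ * (5 - 2 * ξ) * (1 + ξ)
    nlinarith
  have hR3 : R₃ < 0 := by
    have := mul_pos h0 hP
    show -(1 / 4) * ξ * (4 - ξ + 2 * ξ ^ 2 - ξ ^ 3) < 0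
    nlinarith
  have hq : (0:ℝ) ≤ 5 * ξ ^ 2 - 18 * ξ + 17 := by nlinarith [sq_nonneg (5 * ξ - 9)]
  have h65 : -R₃ ≤ 6 / 5 * R₂ := by
    show -(-(1 / 4) * ξ * (4 - ξ + 2 * ξ ^ 2 - ξ ^ 3)) ≤ 6 / 5 * ((1 / 6) * ξ * (5 - 2 * ξ) * (1 + ξ))
    nlinarith [mul_nonneg h0.le hq]
  have hb : R₂ ^ 3 ≤ R₃ ^ 2 := by
    show ((1 / 6) * ξ * (5 - 2 * ξ) * (1 + ξ)) ^ 3 ≤ (-(1 / 4) * ξ * (4 - ξ + 2 * ξ ^ 2 - ξ ^ 3)) ^ 2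
    nlinarith [sq_nonneg (1 - ξ), sq_nonneg ξ, mul_pos h0 h0, sq_nonneg (ξ * (1 - ξ)),
      mul_nonneg (mul_nonneg h0.le h0.le) h0.le, mul_nonneg (sq_nonneg (1 - ξ)) h0.le,
      mul_nonneg (mul_nonneg (sq_nonneg (1 - ξ)) h0.le) h0.le,
      mul_nonneg (mul_nonneg (sq_nonneg (1 - ξ)) (sq_nonneg ξ)) h0.le]
  have hr1 : R₂ ^ 2 ≤ R₁ * R₃ := by
    show ((1 / 6) * ξ * (5 - 2 * ξ) * (1 + ξ)) ^ 2 ≤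
      (-(1 / 2) * ξ * (3 - ξ)) * (-(1 / 4) * ξ * (4 - ξ + 2 * ξ ^ 2 - ξ ^ 3))
    nlinarith [sq_nonneg (1 - ξ), mul_nonneg (sq_nonneg (1 - ξ)) h0.le,
      mul_nonneg (mul_nonneg h0.le h0.le) (sq_nonneg (1 - ξ)), sq_nonneg ξ]
  exact aux_c2b4 R₁ R₂ R₃ hR2 hR3 h65 hb hr1
end

section
/- For ξ ∈ (0,1], with R₂(ξ) = (1/6)ξ(5-2ξ)(1+ξ) and R₃(ξ) = -(1/4)ξ(4-ξ+2ξ²-ξ³), the ratio |R₃(ξ)/R₂(ξ)| is at most 6/5. -/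
theorem ratio_R3_R2_bound (ξ : ℝ) (h0 : 0 < ξ) (h1 : ξ ≤ 1) :
    |(-(1 / 4) * ξ * (4 - ξ + 2 * ξ ^ 2 - ξ ^ 3)) /
      ((1 / 6) * ξ * (5 - 2 * ξ) * (1 + ξ))| ≤ 6 / 5 := by
  have hD : (0:ℝ) < (1 / 6) * ξ * (5 - 2 * ξ) * (1 + ξ) := by nlinarith [mul_pos h0 h0, mul_pos (mul_pos h0 h0) h0]
  rw [abs_div, abs_of_pos hD, div_le_iff₀ hD]
  have hN : -(1 / 4) * ξ * (4 - ξ + 2 * ξ ^ 2 - ξ ^ 3) ≤ 0 := by nlinarith [mul_pos h0 h0, mul_pos (mul_pos h0 h0) h0]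
  rw [abs_of_nonpos hN]
  nlinarith [sq_nonneg (ξ - 9/5), mul_pos h0 h0, sq_nonneg (ξ - 1)]
end

section
/- With R₂, R₃ as above, for all ξ ∈ [0,1] and z ∈ [0,1], the inequality R₂(ξ,z)³ ≥ (64/81)·R₃(ξ,z)² holds when ξ ≤ min(z³, 1/2). -/
set_option maxHeartbeats 1000000

theorem R2_cubed_ge_R3_squared (ξ z : ℝ) (hξ0 : 0 ≤ ξ) (hξ1 : ξ ≤ 1)
    (hz0 : 0 ≤ z) (hz1 : z ≤ 1) (hmin : ξ ≤ min (z ^ 3) (1 / 2)) :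
    ((5 / 6) * ξ + (1 / 2) * ξ ^ 2 - (1 / 3) * ξ ^ 3 + (ξ ^ 2 - 3 * ξ) * z + z ^ 2) ^ 3 ≥
      (64 / 81) *
        ((1 / 4) * (-4 * ξ + ξ ^ 2 - 2 * ξ ^ 3 + ξ ^ 4) +
          (1 / 4) * (10 * ξ + 6 * ξ ^ 2 - 4 * ξ ^ 3) * z +
          (1 / 4) * (-18 * ξ + 6 * ξ ^ 2) * z ^ 2 + z ^ 3) ^ 2 := by
  have hx : (0:ℝ) ≤ ξ := hξ0
  have hz : (0:ℝ) ≤ z := hz0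
  have hg1 : (0:ℝ) ≤ z ^ 3 - ξ := by
    have := le_trans hmin (min_le_left _ _); linarith
  have hg2 : (0:ℝ) ≤ 1 / 2 - ξ := by
    have := le_trans hmin (min_le_right _ _); linarith
  have hg3 : (0:ℝ) ≤ 1 - z := by linarith
  set R2 : ℝ := (5 / 6) * ξ + (1 / 2) * ξ ^ 2 - (1 / 3) * ξ ^ 3 + (ξ ^ 2 - 3 * ξ) * z + z ^ 2 with hR2def
  set R3 : ℝ := (1 / 4) * (-4 * ξ + ξ ^ 2 - 2 * ξ ^ 3 + ξ ^ 4) +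
      (1 / 4) * (10 * ξ + 6 * ξ ^ 2 - 4 * ξ ^ 3) * z +
      (1 / 4) * (-18 * ξ + 6 * ξ ^ 2) * z ^ 2 + z ^ 3 with hR3def
  set P : ℝ := z - (9/8) * ξ + (1/4) * ξ ^ 2 with hPdef
  have hP : 0 ≤ P := by
    rw [hPdef]
    linarith [hz, (mul_nonneg (mul_nonneg (mul_nonneg hz hz) hg3) hg3), hg1, (mul_nonneg (mul_nonneg hz hg3) hg3), (mul_nonneg hx hg2), (mul_nonneg hg1 hg3), (mul_nonneg (mul_nonneg (mul_nonneg hx hz) hz) hg2), (mul_nonneg (mul_nonneg (mul_nonneg hx hz) hg3) hg3), (mul_nonneg (mul_nonneg (mul_nonneg hz hz) hz) hg2), (mul_nonneg (mul_nonneg hz hg2) hg2), (mul_nonneg (mul_nonneg (mul_nonneg hx hx) hg3) hg3)]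
  have hA : 0 ≤ R3 := by
    rw [hR3def]
    linarith [(mul_nonneg (mul_nonneg (mul_nonneg hx hz) hz) hg1), (mul_nonneg (mul_nonneg (mul_nonneg (mul_nonneg hx hx) hz) hz) hg2), (mul_nonneg (mul_nonneg (mul_nonneg hg1 hg3) hg3) hg3), (mul_nonneg (mul_nonneg (mul_nonneg (mul_nonneg (mul_nonneg hz hz) hz) hz) hg3) hg3), (mul_nonneg (mul_nonneg (mul_nonneg (mul_nonneg (mul_nonneg hx hz) hz) hg3) hg3) hg3), (mul_nonneg (mul_nonneg (mul_nonneg (mul_nonneg (mul_nonneg hx hx) hx) hg3) hg3) hg3), (mul_nonneg (mul_nonneg (mul_nonneg (mul_nonneg hx hz) hg3) hg3) hg3), (mul_nonneg (mul_nonneg (mul_nonneg hz hz) hg1) hg3), (mul_nonneg (mul_nonneg (mul_nonneg (mul_nonneg (mul_nonneg hx hz) hz) hz) hz) hz), (mul_nonneg (mul_nonneg (mul_nonneg hx hg1) hg3) hg3), (mul_nonneg (mul_nonneg (mul_nonneg (mul_nonneg (mul_nonneg hx hx) hg3) hg3) hg3) hg3), (mul_nonneg hg1 hg3), hg1, (mul_nonneg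 (mul_nonneg (mul_nonneg (mul_nonneg (mul_nonneg hx hz) hz) hg2) hg3) hg3), (mul_nonneg (mul_nonneg (mul_nonneg hz hg1) hg2) hg2), (mul_nonneg (mul_nonneg (mul_nonneg hg1 hg2) hg2) hg2), (mul_nonneg hg1 hg2), (mul_nonneg (mul_nonneg (mul_nonneg hx hx) hx) hg1), (mul_nonneg (mul_nonneg (mul_nonneg (mul_nonneg (mul_nonneg hx hx) hx) hx) hx) hg3), (mul_nonneg (mul_nonneg (mul_nonneg (mul_nonneg hx hx) hz) hg2) hg2), (mul_nonneg (mul_nonneg (mul_nonneg (mul_nonneg (mul_nonneg hx hx) hg2) hg2) hg2) hg3)]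
  have hC : P ^ 2 ≤ R2 := by
    rw [hPdef, hR2def]
    linarith [(mul_nonneg hx hg2), (mul_nonneg hx hg3), (mul_nonneg (mul_nonneg (mul_nonneg hx hg2) hg3) hg3), (mul_nonneg (mul_nonneg (mul_nonneg hx hz) hg3) hg3), (mul_nonneg (mul_nonneg (mul_nonneg (mul_nonneg hx hz) hz) hg3) hg3), (mul_nonneg (mul_nonneg (mul_nonneg (mul_nonneg hx hz) hz) hg2) hg3), (mul_nonneg (mul_nonneg hx hg1) hg3), (mul_nonneg (mul_nonneg (mul_nonneg (mul_nonneg hx hx) hg3) hg3) hg3), (mul_nonneg (mul_nonneg hx hg2) hg2), (mul_nonneg (mul_nonneg (mul_nonneg (mul_nonneg hx hx) hx) hx) hg2), (mul_nonneg (mul_nonneg (mul_nonneg (mul_nonneg hx hg2) hg2) hg2) hg2)]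
  have hD : 8 * R3 ≤ 9 * (P * R2) := by
    rw [hPdef, hR2def, hR3def]
    linarith [(mul_nonneg (mul_nonneg hz hg1) hg2), (mul_nonneg (mul_nonneg (mul_nonneg hx hg2) hg3) hg3), (mul_nonneg (mul_nonneg (mul_nonneg (mul_nonneg (mul_nonneg hx hz) hz) hg3) hg3) hg3), (mul_nonneg (mul_nonneg (mul_nonneg hx hg1) hg3) hg3), (mul_nonneg (mul_nonneg (mul_nonneg (mul_nonneg (mul_nonneg hx hg2) hg2) hg3) hg3) hg3), (mul_nonneg (mul_nonneg (mul_nonneg (mul_nonneg (mul_nonneg hz hz) hz) hg2) hg2) hg3), (mul_nonneg (mul_nonneg (mul_nonneg (mul_nonneg (mul_nonneg hx hg2) hg2) hg2) hg3) hg3), (mul_nonneg (mul_nonneg (mul_nonneg (mul_nonneg hx hz) hg3) hg3) hg3), (mul_nonneg (mul_nonneg (mul_nonneg (mul_nonneg (mul_nonneg hx hz) hz) hg2) hg3) hg3), (mul_nonneg (mul_nonneg (mul_nonneg (mul_nonneg hx hx) hx) hx) hg3), (mul_nonneg (mul_nonneg (mul_nonneg (mul_nonneg (mul_nonneg hx hx)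 hz) hz) hg2) hg3), (mul_nonneg (mul_nonneg (mul_nonneg hx hx) hg1) hg3), (mul_nonneg (mul_nonneg (mul_nonneg hg1 hg2) hg2) hg2), (mul_nonneg (mul_nonneg (mul_nonneg (mul_nonneg (mul_nonneg hx hx) hg3) hg3) hg3) hg3), (mul_nonneg (mul_nonneg (mul_nonneg (mul_nonneg hx hg2) hg2) hg2) hg3), (mul_nonneg (mul_nonneg hg1 hg2) hg2), (mul_nonneg (mul_nonneg (mul_nonneg (mul_nonneg hz hz) hz) hg2) hg2), (mul_nonneg (mul_nonneg hx hg3) hg3), (mul_nonneg (mul_nonneg (mul_nonneg (mul_nonneg (mul_nonneg hx hx) hz) hz) hg2) hg2), (mul_nonneg (mul_nonneg (mul_nonneg (mul_nonneg (mul_nonneg hx hx) hx) hx) hx) hg2), (mul_nonneg (mul_nonneg (mul_nonneg (mul_nonneg (mul_nonneg hx hx) hg2) hg2) hg2) hg2)]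
  clear_value R2 R3 P
  have hPR2 : 0 ≤ P * R2 := by nlinarith [sq_nonneg P, hC, hP]
  have h64 : 64 * R3 ^ 2 ≤ 81 * (P * R2) ^ 2 := by nlinarith [mul_le_mul hD hD (by linarith) (by linarith), hA]
  have hR2nn : 0 ≤ R2 := le_trans (sq_nonneg P) hC
  have h81 : 81 * (P * R2) ^ 2 ≤ 81 * R2 ^ 3 := by nlinarith [mul_le_mul_of_nonneg_right hC (mul_nonneg hR2nn hR2nn), sq_nonneg R2]
  have : 64 * R3 ^ 2 ≤ 81 * R2 ^ 3 := le_trans h64 h81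
  linarith
end
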